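/- Let u : Fin N → ℝ be a probability mass function with positive entries, not all equal. Define f(ϖ, x) = u x * exp(ϖ*(1 - u x)) / (∑ i, u i * exp(ϖ*(1 - u i))). If x, y are indices with u x < u y and ϖ̃ > 0 is a real number with f(ϖ̃, y) = u y, then f(ϖ̃, x) > u x. -/

import Mathlib

theorem stmt_17 (N : ℕ) (hN : 2 ≤ N) (u : Fin N → ℝ)
    (hpos : ∀ i, 0 < u i) (hsum : ∑ i, u i = 1)
    (x y : Fin N) (hxy : u x < u y)
    (ϖ : ℝ) (hϖ : 0 < ϖ)
    (hfix : u y * Real.exp (ϖ * (1 - u y)) /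
      (∑ i, u i * Real.exp (ϖ * (1 - u i))) = u y) :
    u x < u x * Real.exp (ϖ * (1 - u x)) /
      (∑ i, u i * Real.exp (ϖ * (1 - u i))) := by
  set S := ∑ i, u i * Real.exp (ϖ * (1 - u i)) with hSdef
  have hS : 0 < S := by
    apply Finset.sum_pos
    · intro i _
      exact mul_pos (hpos i) (Real.exp_pos _)
    · exact ⟨x, Finset.mem_univ x⟩
  have h2 : Real.exp (ϖ * (1 - u y)) = S := by
    field_simp at hfix
    have h := mul_left_cancel₀ (ne_of_gt (hpos y)) hfix
    linarith
  have h3 : Real.exp (ϖ * (1 - u y)) < Real.exp (ϖ * (1 - u x)) := by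
    apply Real.exp_lt_exp.2
    nlinarith
  rw [lt_div_iff₀ hS]
  calc u x * S = u x * Real.exp (ϖ * (1 - u y)) := by rw [h2]
    _ < u x * Real.exp (ϖ * (1 - u x)) := by
        exact mul_lt_mul_of_pos_left h3 (hpos x)
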